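/- arXiv:2208.02118 — 3 statements merged into one kernel-verified Lean document; each statement's English description precedes it below -/
import Mathlib

section
/- Let 𝒳 and 𝒴 be non-negative real-valued random variables on a probability space, let α ≥ 0, let n ≥ 1 be a natural number, and let g be a real number with 1 ≤ g ≤ n. Then α^g · E[𝒳^{n−g} · 𝒴] ≤ E[𝒳^n] + α^n · E[𝒴^{n/g}], where the expectations are Lebesgue integrals taking values in [0,∞]. -/
open MeasureTheory ProbabilityTheory Matrix Asymptotics
open scoped ENNReal NNReal Kronecker ProbabilityTheory

noncomputable section


/-- Young-type inequality for moments: for non-negative random variables `X, Y`,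
`α ≥ 0`, `n ≥ 1` and `1 ≤ g ≤ n`, one has `α^g E[X^{n-g} Y] ≤ E[X^n] + α^n E[Y^{n/g}]`. -/
theorem young_moment_inequality
    {Ω : Type} [MeasureSpace Ω] [IsProbabilityMeasure (ℙ : Measure Ω)]
    (X Y : Ω → ℝ) (hXm : Measurable X) (hYm : Measurable Y)
    (hX : ∀ ω, 0 ≤ X ω) (hY : ∀ ω, 0 ≤ Y ω)
    (α : ℝ) (hα : 0 ≤ α) (n : ℕ) (hn : 1 ≤ n) (g : ℝ) (hg1 : 1 ≤ g) (hgn : g ≤ n) :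
    ENNReal.ofReal (α ^ g) * ∫⁻ ω, ENNReal.ofReal (X ω ^ ((n : ℝ) - g) * Y ω) ≤
      (∫⁻ ω, ENNReal.ofReal (X ω ^ (n : ℝ))) +
        ENNReal.ofReal (α ^ (n : ℝ)) * ∫⁻ ω, ENNReal.ofReal (Y ω ^ ((n : ℝ) / g)) := by
  have hn' : (0:ℝ) < n := by exact_mod_cast hn
  have hg0 : (0:ℝ) < g := lt_of_lt_of_le one_pos hg1
  have key : ∀ ω, α ^ g * (X ω ^ ((n:ℝ) - g) * Y ω) ≤
      X ω ^ (n:ℝ) + α ^ (n:ℝ) * Y ω ^ ((n:ℝ)/g) := by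
    intro ω
    set x := X ω with hxdef
    set y := Y ω with hydef
    have hx : 0 ≤ x := hX ω
    have hy : 0 ≤ y := hY ω
    have hw1 : (0:ℝ) ≤ ((n:ℝ) - g) / n := by
      apply div_nonneg (by linarith) hn'.le
    have hw2 : (0:ℝ) ≤ g / n := div_nonneg hg0.le hn'.le
    have hp1 : (0:ℝ) ≤ x ^ (n:ℝ) := Real.rpow_nonneg hx _
    have hp2 : (0:ℝ) ≤ α ^ (n:ℝ) * y ^ ((n:ℝ)/g) :=
      mul_nonneg (Real.rpow_nonneg hα _) (Real.rpow_nonneg hy _)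
    have hsum : ((n:ℝ) - g) / n + g / n = 1 := by field_simp; ring
    have amgm := Real.geom_mean_le_arith_mean2_weighted hw1 hw2 hp1 hp2 hsum
    have e1 : (x ^ (n:ℝ)) ^ (((n:ℝ) - g) / n) = x ^ ((n:ℝ) - g) := by
      rw [← Real.rpow_mul hx]
      congr 1
      field_simp
    have e2 : (α ^ (n:ℝ) * y ^ ((n:ℝ)/g)) ^ (g / n) = α ^ g * y := by
      rw [Real.mul_rpow (Real.rpow_nonneg hα _) (Real.rpow_nonneg hy _),
        ← Real.rpow_mul hα, ← Real.rpow_mul hy]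
      have : (n:ℝ) * (g / n) = g := by field_simp
      rw [this]
      have : (n:ℝ) / g * (g / n) = 1 := by field_simp
      rw [this, Real.rpow_one]
    rw [e1, e2] at amgm
    have hle : ((n:ℝ) - g) / n * x ^ (n:ℝ) + g / n * (α ^ (n:ℝ) * y ^ ((n:ℝ)/g)) ≤
        x ^ (n:ℝ) + α ^ (n:ℝ) * y ^ ((n:ℝ)/g) := by
      have ha1 : ((n:ℝ) - g) / n ≤ 1 := div_le_one_of_le₀ (by linarith) hn'.le
      have hb1 : g / n ≤ 1 := div_le_one_of_le₀ hgn hn'.le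
      exact add_le_add (mul_le_of_le_one_left hp1 ha1) (mul_le_of_le_one_left hp2 hb1)
    calc α ^ g * (x ^ ((n:ℝ) - g) * y) = x ^ ((n:ℝ) - g) * (α ^ g * y) := by ring
      _ ≤ _ := amgm
      _ ≤ _ := hle
  have hXr : Measurable fun ω => X ω ^ (n:ℝ) := ((Real.continuous_rpow_const hn'.le).measurable).comp hXm
  have hYr : Measurable fun ω => Y ω ^ ((n:ℝ)/g) := ((Real.continuous_rpow_const (div_nonneg hn'.le hg0.le)).measurable).comp hYm
  calc ENNReal.ofReal (α ^ g) * ∫⁻ ω, ENNReal.ofReal (X ω ^ ((n : ℝ) - g) * Y ω)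
      = ∫⁻ ω, ENNReal.ofReal (α ^ g * (X ω ^ ((n:ℝ) - g) * Y ω)) := by
        rw [← lintegral_const_mul' _ _ ENNReal.ofReal_ne_top]
        congr 1; funext ω
        rw [ENNReal.ofReal_mul (Real.rpow_nonneg hα _)]
    _ ≤ ∫⁻ ω, ENNReal.ofReal (X ω ^ (n:ℝ) + α ^ (n:ℝ) * Y ω ^ ((n:ℝ)/g)) :=
        lintegral_mono fun ω => ENNReal.ofReal_le_ofReal (key ω)
    _ = (∫⁻ ω, ENNReal.ofReal (X ω ^ (n : ℝ))) +
        ENNReal.ofReal (α ^ (n : ℝ)) * ∫⁻ ω, ENNReal.ofReal (Y ω ^ ((n : ℝ) / g)) := by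
        have : ∀ ω, ENNReal.ofReal (X ω ^ (n:ℝ) + α ^ (n:ℝ) * Y ω ^ ((n:ℝ)/g)) =
            ENNReal.ofReal (X ω ^ (n:ℝ)) +
              ENNReal.ofReal (α ^ (n:ℝ)) * ENNReal.ofReal (Y ω ^ ((n:ℝ)/g)) := by
          intro ω
          rw [ENNReal.ofReal_add (Real.rpow_nonneg (hX ω) _)
              (mul_nonneg (Real.rpow_nonneg hα _) (Real.rpow_nonneg (hY ω) _)),
            ENNReal.ofReal_mul (Real.rpow_nonneg hα _)]
        simp_rw [this]
        rw [lintegral_add_left hXr.ennreal_ofReal,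
          lintegral_const_mul' _ _ ENNReal.ofReal_ne_top]

end
end

section
/- Let P be a self-adjoint non-commutative polynomial in d+q variables, let X = (X_1,…,X_d) be Hermitian N×N complex matrices, let A = (A_1,…,A_q) be N×N complex matrices with the tuple closed under adjoints, let s ∈ {1,…,d}, and let Δ be a Hermitian N×N matrix. Then the map u ↦ exp( i·P(X_1,…,X_{s−1}, X_s + uΔ, X_{s+1},…,X_d, A) ) is differentiable at u = 0 with derivative i ∫₀¹ e^{iα P(X,A)} · ( ∂_s P(X,A) # Δ ) · e^{i(1−α) P(X,A)} dα, where for a monomial M, ∂_s M # Δ := Σ A'(X,A)·Δ·B'(X,A) summed over all decompositions M = A' X_s B' into words A', B', extended linearly to P. -/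
open MeasureTheory ProbabilityTheory Matrix Asymptotics
open scoped ENNReal NNReal Kronecker ProbabilityTheory

noncomputable section

/-- Square complex matrices of size `N`. -/
abbrev Mat (N : ℕ) := Matrix (Fin N) (Fin N) ℂ

/-- The normalized trace `(1/N) Tr`. -/
def ntr {N : ℕ} (M : Mat N) : ℂ := (N : ℂ)⁻¹ * Matrix.trace M

/-- Evaluation of a non-commutative polynomial in `d + q` variables at the tuple `(Y, A)`. -/
def evalPoly {d q N : ℕ} (Y : Fin d → Mat N) (A : Fin q → Mat N) :
    FreeAlgebra ℂ (Fin d ⊕ Fin q) →ₐ[ℂ] Mat N :=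
  FreeAlgebra.lift ℂ (Sum.elim Y A)

/-- The involution `*` on non-commutative polynomials: it fixes the `X`-variables, permutes
the `Z`-variables according to the pairing `σ`, conjugates scalars and reverses products.
A polynomial `P` is self-adjoint when `polyStar d q σ P = P`. -/
def polyStar (d q : ℕ) (σ : Fin q → Fin q) (P : FreeAlgebra ℂ (Fin d ⊕ Fin q)) :
    FreeAlgebra ℂ (Fin d ⊕ Fin q) :=
  FreeAlgebra.lift ℂ (fun i => FreeAlgebra.ι ℂ (Sum.map id σ i)) (star P)

/-- Entrywise matrix-valued integral `∫₀¹ f(α) dα`. -/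
def mIntegral {ι : Type} (f : ℝ → Matrix ι ι ℂ) : Matrix ι ι ℂ :=
  Matrix.of fun i j => ∫ α in (0:ℝ)..(1:ℝ), f α i j

/-- Auxiliary block-matrix algebra morphism computing `∂_s P # Δ`: the generator `v` is sent
to `[[v, δ_{v = X_s}·Δ], [0, v]]`, so that the upper-right block of the image of a monomial
`M` is `∑_{M = A X_s B} A(X,A')·Δ·B(X,A')`. -/
def dSharpAux {d q N : ℕ} (s : Fin d) (Δ : Mat N) (Y : Fin d → Mat N) (A : Fin q → Mat N) :
    FreeAlgebra ℂ (Fin d ⊕ Fin q) →ₐ[ℂ] Matrix (Fin N ⊕ Fin N) (Fin N ⊕ Fin N) ℂ :=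
  FreeAlgebra.lift ℂ fun v =>
    Matrix.fromBlocks (Sum.elim Y A v) (if v = Sum.inl s then Δ else 0) 0 (Sum.elim Y A v)

/-- `∂_s P(X,A) # Δ = ∑_{M = A' X_s B'} A'(X,A)·Δ·B'(X,A)`, extended linearly in `P`. -/
def dSharp {d q N : ℕ} (s : Fin d) (Δ : Mat N) (Y : Fin d → Mat N) (A : Fin q → Mat N)
    (P : FreeAlgebra ℂ (Fin d ⊕ Fin q)) : Mat N :=
  (dSharpAux s Δ Y A P).toBlocks₁₂

/-! ### Auxiliary lemmas -/

section AlgebraicAux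

variable {d q N : ℕ} (s : Fin d) (Δ : Mat N) (X : Fin d → Mat N) (A : Fin q → Mat N)

lemma dSharpAux_eq (P : FreeAlgebra ℂ (Fin d ⊕ Fin q)) :
    dSharpAux s Δ X A P
      = Matrix.fromBlocks (evalPoly X A P) (dSharp s Δ X A P) 0 (evalPoly X A P) := by
  unfold dSharp
  induction P using FreeAlgebra.induction with
  | grade0 r =>
      ext (i | i) (j | j) <;>
        simp [Matrix.algebraMap_matrix_apply, Matrix.toBlocks₁₂]
  | grade1 v =>
      simp [dSharpAux, evalPoly, Matrix.toBlocks_fromBlocks₁₂]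
  | mul a b ha hb =>
      rw [_root_.map_mul, _root_.map_mul, ha, hb, Matrix.fromBlocks_multiply]
      simp [Matrix.toBlocks_fromBlocks₁₂]
  | add a b ha hb =>
      rw [_root_.map_add, _root_.map_add, ha, hb, Matrix.fromBlocks_add]
      ext (i | i) (j | j) <;> simp [Matrix.toBlocks₁₂]

lemma dSharp_algebraMap (r : ℂ) : dSharp s Δ X A (algebraMap ℂ _ r) = 0 := by
  unfold dSharp
  rw [AlgHom.commutes]
  ext i j
  simp [Matrix.toBlocks₁₂, Matrix.algebraMap_matrix_apply]

lemma dSharp_ι (v : Fin d ⊕ Fin q) :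
    dSharp s Δ X A (FreeAlgebra.ι ℂ v) = if v = Sum.inl s then Δ else 0 := by
  unfold dSharp dSharpAux
  rw [FreeAlgebra.lift_ι_apply]
  exact Matrix.toBlocks_fromBlocks₁₂ _ _ _ _

lemma dSharp_add (a b : FreeAlgebra ℂ (Fin d ⊕ Fin q)) :
    dSharp s Δ X A (a + b) = dSharp s Δ X A a + dSharp s Δ X A b := by
  unfold dSharp
  rw [_root_.map_add]
  ext i j
  simp [Matrix.toBlocks₁₂]

lemma dSharp_mul (a b : FreeAlgebra ℂ (Fin d ⊕ Fin q)) :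
    dSharp s Δ X A (a * b)
      = evalPoly X A a * dSharp s Δ X A b + dSharp s Δ X A a * evalPoly X A b := by
  have h := dSharpAux_eq s Δ X A (a * b)
  rw [_root_.map_mul, dSharpAux_eq s Δ X A a, dSharpAux_eq s Δ X A b,
    Matrix.fromBlocks_multiply] at h
  have h2 := congrArg Matrix.toBlocks₁₂ h
  rw [Matrix.toBlocks_fromBlocks₁₂, Matrix.toBlocks_fromBlocks₁₂] at h2
  simpa using h2.symm

end AlgebraicAux

section AnalyticAux

attribute [local instance] Matrix.linftyOpNormedRing Matrix.linftyOpNormedAlgebra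

variable {N : ℕ}

lemma Mat.norm_entry_le (M : Mat N) (i j : Fin N) : ‖M i j‖ ≤ ‖M‖ := by
  have h : ‖M i j‖₊ ≤ ‖M‖₊ := by
    rw [Matrix.linfty_opNNNorm_def]
    exact le_trans
      (Finset.single_le_sum (f := fun j => ‖M i j‖₊) (fun _ _ => zero_le) (Finset.mem_univ j))
      (Finset.le_sup (f := fun i => ∑ j, ‖M i j‖₊) (Finset.mem_univ i))
  exact_mod_cast h

/-- The entry map as a continuous linear map. -/
def entryCLM (i j : Fin N) : Mat N →L[ℝ] ℂ :=
  LinearMap.mkContinuous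
    { toFun := fun M : Mat N => M i j
      map_add' := fun _ _ => rfl
      map_smul' := fun _ _ => rfl }
    1 (fun M => by rw [one_mul]; exact Mat.norm_entry_le M i j)

lemma HasDerivAt.matEntry {f : ℝ → Mat N} {f' : Mat N} {x : ℝ}
    (h : HasDerivAt f f' x) (i j : Fin N) :
    HasDerivAt (fun t => f t i j) (f' i j) x :=
  (entryCLM i j).hasFDerivAt.comp_hasDerivAt x h

lemma duhamel_entry (M B : Mat N) (i j : Fin N) :
    NormedSpace.exp (M + B) i j - NormedSpace.exp M i j
      = ∫ α in (0:ℝ)..1,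
          (NormedSpace.exp (α • (M + B)) * B * NormedSpace.exp ((1 - α) • M)) i j := by
  have hderiv : ∀ α : ℝ,
      HasDerivAt (fun t : ℝ => NormedSpace.exp (t • (M + B)) * NormedSpace.exp ((1 - t) • M))
        (NormedSpace.exp (α • (M + B)) * B * NormedSpace.exp ((1 - α) • M)) α := by
    intro α
    have h1 : HasDerivAt (fun t : ℝ => NormedSpace.exp (t • (M + B)))
        (NormedSpace.exp (α • (M + B)) * (M + B)) α := hasDerivAt_exp_smul_const (M + B) α
    have hsub : HasDerivAt (fun t : ℝ => 1 - t) (-1) α := (hasDerivAt_id α).const_sub 1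
    have h2 : HasDerivAt (fun t : ℝ => NormedSpace.exp ((1 - t) • M))
        ((-1 : ℝ) • (NormedSpace.exp ((1 - α) • M) * M)) α :=
      (hasDerivAt_exp_smul_const M (1 - α)).scomp α hsub
    have hmul := h1.mul h2
    refine hmul.congr_deriv ?_
    have hcomm : M * NormedSpace.exp ((1 - α) • M) = NormedSpace.exp ((1 - α) • M) * M :=
      (((Commute.refl M).smul_right (1 - α)).exp_right).eq
    simp only [neg_one_smul, mul_neg]
    rw [← hcomm]
    noncomm_ring
  have c1 : Continuous fun α : ℝ => NormedSpace.exp (α • (M + B)) :=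
    NormedSpace.exp_continuous.comp (continuous_id.smul continuous_const)
  have c2 : Continuous fun α : ℝ => NormedSpace.exp ((1 - α) • M) :=
    NormedSpace.exp_continuous.comp ((continuous_const.sub continuous_id).smul continuous_const)
  have hcont : Continuous fun α : ℝ =>
      (NormedSpace.exp (α • (M + B)) * B * NormedSpace.exp ((1 - α) • M)) i j :=
    (entryCLM i j).continuous.comp ((c1.mul continuous_const).mul c2)
  have hftc := intervalIntegral.integral_eq_sub_of_hasDerivAt
    (f := fun t : ℝ => (NormedSpace.exp (t • (M + B)) * NormedSpace.exp ((1 - t) • M)) i j)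
    (f' := fun α : ℝ =>
      (NormedSpace.exp (α • (M + B)) * B * NormedSpace.exp ((1 - α) • M)) i j)
    (fun α _ => (hderiv α).matEntry i j) (hcont.intervalIntegrable 0 1)
  rw [hftc]
  simp [NormedSpace.exp_zero]

lemma hasDerivAt_evalPoly {d q : ℕ} (s : Fin d) (Δ : Mat N) (X : Fin d → Mat N)
    (A : Fin q → Mat N) (P : FreeAlgebra ℂ (Fin d ⊕ Fin q)) :
    HasDerivAt (fun u : ℂ => evalPoly (Function.update X s (X s + u • Δ)) A P)
      (dSharp s Δ X A P) 0 := by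
  induction P using FreeAlgebra.induction with
  | grade0 r =>
      simp only [AlgHom.commutes, dSharp_algebraMap]
      exact hasDerivAt_const 0 _
  | grade1 v =>
      rcases v with t | k
      · rcases eq_or_ne t s with rfl | hts
        · simp only [evalPoly, FreeAlgebra.lift_ι_apply, Sum.elim_inl, Function.update_self,
            dSharp_ι, if_pos rfl]
          have h0 := ((hasDerivAt_id (0 : ℂ)).smul_const Δ).const_add (X t)
          simp only [id, one_smul] at h0
          exact h0
        · simp only [evalPoly, FreeAlgebra.lift_ι_apply, Sum.elim_inl,
            Function.update_of_ne hts, dSharp_ι]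
          rw [if_neg (by simpa using hts)]
          exact hasDerivAt_const 0 _
      · simp only [evalPoly, FreeAlgebra.lift_ι_apply, Sum.elim_inr, dSharp_ι]
        rw [if_neg (by simp)]
        exact hasDerivAt_const 0 _
  | mul a b ha hb =>
      have h := ha.mul hb
      simp only [zero_smul, add_zero, Function.update_eq_self] at h
      simp only [_root_.map_mul]
      rw [dSharp_mul, add_comm]
      exact h
  | add a b ha hb =>
      simp only [_root_.map_add, dSharp_add]
      exact ha.add hb

end AnalyticAux

/-- Duhamel's formula: the derivative at `u = 0` of
`u ↦ exp(i P(X₁,…,X_s + uΔ,…,X_d, A))` is `i ∫₀¹ e^{iαP(X,A)} (∂_s P(X,A) # Δ) e^{i(1-α)P(X,A)} dα`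
(stated entrywise; the matrix-valued integral is taken entrywise). -/
theorem hasDerivAt_exp_poly
    (d q N : ℕ) (σ : Fin q → Fin q) (hσ : ∀ j, σ (σ j) = j)
    (P : FreeAlgebra ℂ (Fin d ⊕ Fin q)) (hP : polyStar d q σ P = P)
    (X : Fin d → Mat N) (hX : ∀ s, (X s).IsHermitian)
    (A : Fin q → Mat N) (hA : ∀ j, A (σ j) = (A j)ᴴ)
    (s : Fin d) (Δ : Mat N) (hΔ : Δ.IsHermitian) :
    ∀ i j : Fin N, HasDerivAt
      (fun u : ℝ =>
        NormedSpace.exp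
          (Complex.I • evalPoly (Function.update X s (X s + (u : ℂ) • Δ)) A P) i j)
      ((Complex.I • mIntegral fun α =>
        NormedSpace.exp ((Complex.I * (α : ℂ)) • evalPoly X A P) * dSharp s Δ X A P *
          NormedSpace.exp ((Complex.I * (1 - (α : ℂ))) • evalPoly X A P)) i j)
      0 := by
  letI : NormedRing (Mat N) := Matrix.linftyOpNormedRing
  letI : NormedAlgebra ℝ (Mat N) := Matrix.linftyOpNormedAlgebra
  letI : NormedAlgebra ℂ (Mat N) := Matrix.linftyOpNormedAlgebra
  letI : NormedAlgebra ℚ (Mat N) := Matrix.linftyOpNormedAlgebra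
  intro i j
  have hee : (NormedSpace.exp : Mat N → Mat N) = NormedSpace.exp :=
    rfl
  have hrs : ∀ (r : ℝ) (x : Mat N), r • x = (r : ℂ) • x := fun r x => by
    rw [← algebraMap_smul ℂ r x, Complex.coe_algebraMap]
  set P₀ : Mat N := evalPoly X A P with hP₀def
  set dS : Mat N := dSharp s Δ X A P with hdSdef
  set M₀ : Mat N := Complex.I • P₀ with hM₀def
  set f : ℝ → Mat N := fun u => evalPoly (Function.update X s (X s + (u : ℂ) • Δ)) A P with hfdef
  have hf0 : f 0 = P₀ := by
    simp only [hfdef, Complex.ofReal_zero, zero_smul, add_zero, Function.update_eq_self, hP₀def]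
  have hfD : HasDerivAt f dS 0 := by
    have h := hasDerivAt_evalPoly s Δ X A P
    have h' : HasDerivAt (fun u : ℂ => evalPoly (Function.update X s (X s + u • Δ)) A P)
        dS (((0 : ℝ) : ℂ)) := by simpa [hdSdef] using h
    have h2 := h'.scomp (0 : ℝ) Complex.ofRealCLM.hasDerivAt
    simp only [Complex.ofRealCLM_apply, Complex.ofReal_one, one_smul] at h2
    exact h2
  set g : ℝ → Mat N :=
    fun u => if u = 0 then Complex.I • dS else Complex.I • slope f 0 u with hgdef
  have hg0 : g 0 = Complex.I • dS := by simp [hgdef]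
  have hgu : ∀ u : ℝ, u • g u = Complex.I • (f u - f 0) := by
    intro u
    rcases eq_or_ne u 0 with rfl | hu
    · simp [hgdef]
    · rw [hgdef]
      simp only [if_neg hu]
      rw [slope_def_module]
      rw [smul_comm u Complex.I, sub_zero, smul_inv_smul₀ hu]
  have hgcont : ContinuousAt g 0 := by
    have hslope : Filter.Tendsto (slope f 0) (nhdsWithin 0 {(0:ℝ)}ᶜ) (nhds dS) :=
      hasDerivAt_iff_tendsto_slope.mp hfD
    have h2 : Filter.Tendsto (fun u => Complex.I • slope f 0 u)
        (nhdsWithin 0 {(0:ℝ)}ᶜ) (nhds (Complex.I • dS)) := hslope.const_smul Complex.I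
    have h3 : Filter.Tendsto g (nhdsWithin 0 {(0:ℝ)}ᶜ) (nhds (Complex.I • dS)) := by
      refine h2.congr' ?_
      filter_upwards [self_mem_nhdsWithin] with u hu
      have hu' : u ≠ 0 := hu
      simp [hgdef, hu']
    have h4 : Filter.Tendsto g (pure (0:ℝ)) (nhds (Complex.I • dS)) := by
      rw [Filter.tendsto_pure_left]
      intro U hU
      exact mem_of_mem_nhds (by simpa [hg0] using hU)
    rw [ContinuousAt, hg0, ← nhdsNE_sup_pure (0:ℝ)]
    exact Filter.Tendsto.sup h3 h4
  have key : ∀ u : ℝ, NormedSpace.exp (Complex.I • f u) i j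
      = NormedSpace.exp M₀ i j + (u : ℂ) * ∫ α in (0:ℝ)..1,
          (NormedSpace.exp (α • (M₀ + u • g u)) * g u
            * NormedSpace.exp ((1 - α) • M₀)) i j := by
    intro u
    have hMB : M₀ + u • g u = Complex.I • f u := by
      rw [hgu u, hM₀def, ← hf0, ← smul_add]
      congr 1
      abel
    have hd := duhamel_entry M₀ (u • g u) i j
    have hpull : (∫ α in (0:ℝ)..1,
          (NormedSpace.exp (α • (M₀ + u • g u)) * (u • g u)
            * NormedSpace.exp ((1 - α) • M₀)) i j)
        = (u : ℂ) * ∫ α in (0:ℝ)..1,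
          (NormedSpace.exp (α • (M₀ + u • g u)) * g u
            * NormedSpace.exp ((1 - α) • M₀)) i j := by
      rw [← intervalIntegral.integral_const_mul]
      refine intervalIntegral.integral_congr fun α _ => ?_
      rw [mul_smul_comm, smul_mul_assoc, Matrix.smul_apply, Complex.real_smul]
    rw [← hMB]
    linear_combination hd + hpull
  set Gfun : ℝ → ℂ := fun u => ∫ α in (0:ℝ)..1,
      (NormedSpace.exp (α • (M₀ + u • g u)) * g u
        * NormedSpace.exp ((1 - α) • M₀)) i j with hGdef
  have hGcont : ContinuousAt Gfun 0 := by
    obtain ⟨C, hC⟩ := (isCompact_closedBall (0 : Mat N)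
        (‖M₀‖ + (‖Complex.I • dS‖ + 1))).exists_bound_of_continuousOn
      (NormedSpace.exp_continuous (𝔸 := Mat N)).continuousOn
    have hC' : ∀ Z : Mat N, ‖Z‖ ≤ ‖M₀‖ + (‖Complex.I • dS‖ + 1) →
        ‖NormedSpace.exp Z‖ ≤ C := fun Z hZ =>
      hC Z (by simpa [Metric.mem_closedBall, dist_zero_right] using hZ)
    have hCnn : 0 ≤ C := le_trans (norm_nonneg _) (hC' 0 (by simp; positivity))
    have hKg : ∀ᶠ u in nhds (0:ℝ), ‖g u‖ ≤ ‖Complex.I • dS‖ + 1 := by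
      have h4 : Filter.Tendsto (fun u => ‖g u‖) (nhds 0) (nhds ‖g 0‖) := hgcont.norm
      rw [hg0] at h4
      exact (h4.eventually_lt_const (lt_add_one _)).mono fun u hu => le_of_lt hu
    have hunit : ∀ᶠ u in nhds (0:ℝ), |u| ≤ 1 := by
      filter_upwards [Metric.ball_mem_nhds (0:ℝ) one_pos] with u hu
      rw [Metric.mem_ball, Real.dist_eq, sub_zero] at hu
      exact le_of_lt hu
    refine intervalIntegral.continuousAt_of_dominated_interval ?_ ?_
      (bound := fun _ => C * (‖Complex.I • dS‖ + 1) * C) intervalIntegrable_const ?_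
    · refine Filter.Eventually.of_forall fun u => ?_
      have c1 : Continuous fun α : ℝ => NormedSpace.exp (α • (M₀ + u • g u)) :=
        NormedSpace.exp_continuous.comp (continuous_id.smul continuous_const)
      have c2 : Continuous fun α : ℝ => NormedSpace.exp ((1 - α) • M₀) :=
        NormedSpace.exp_continuous.comp
          ((continuous_const.sub continuous_id).smul continuous_const)
      exact (((entryCLM i j).continuous.comp
        ((c1.mul continuous_const).mul c2)).aestronglyMeasurable)
    · filter_upwards [hKg, hunit] with u hKu h1u
      refine ae_of_all _ fun α hα => ?_
      have hα' : 0 < α ∧ α ≤ 1 := by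
        simpa [Set.uIoc_of_le (zero_le_one (α := ℝ))] using hα
      have hb1 : ‖NormedSpace.exp (α • (M₀ + u • g u))‖ ≤ C := by
        apply hC'
        rw [norm_smul]
        calc ‖α‖ * ‖M₀ + u • g u‖ ≤ 1 * (‖M₀‖ + ‖u • g u‖) := by
              apply mul_le_mul ?_ (norm_add_le _ _) (norm_nonneg _) zero_le_one
              rw [Real.norm_eq_abs, abs_of_pos hα'.1]; exact hα'.2
          _ ≤ ‖M₀‖ + (‖Complex.I • dS‖ + 1) := by
              rw [one_mul]
              have : ‖u • g u‖ ≤ ‖Complex.I • dS‖ + 1 := by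
                rw [norm_smul, Real.norm_eq_abs]
                calc |u| * ‖g u‖ ≤ 1 * (‖Complex.I • dS‖ + 1) :=
                      mul_le_mul h1u hKu (norm_nonneg _) zero_le_one
                  _ = ‖Complex.I • dS‖ + 1 := one_mul _
              linarith
      have hb2 : ‖NormedSpace.exp ((1 - α) • M₀)‖ ≤ C := by
        apply hC'
        rw [norm_smul, Real.norm_eq_abs, abs_of_nonneg (by linarith [hα'.2])]
        nlinarith [norm_nonneg M₀, norm_nonneg (Complex.I • dS), hα'.1, hα'.2]
      calc ‖(NormedSpace.exp (α • (M₀ + u • g u)) * g u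
              * NormedSpace.exp ((1 - α) • M₀)) i j‖
          ≤ ‖NormedSpace.exp (α • (M₀ + u • g u)) * g u
              * NormedSpace.exp ((1 - α) • M₀)‖ := Mat.norm_entry_le _ i j
        _ ≤ ‖NormedSpace.exp (α • (M₀ + u • g u)) * g u‖
              * ‖NormedSpace.exp ((1 - α) • M₀)‖ := norm_mul_le _ _
        _ ≤ ‖NormedSpace.exp (α • (M₀ + u • g u))‖ * ‖g u‖
              * ‖NormedSpace.exp ((1 - α) • M₀)‖ := by
              gcongr; exact norm_mul_le _ _
        _ ≤ C * (‖Complex.I • dS‖ + 1) * C := by gcongr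
    · refine ae_of_all _ fun α _ => ?_
      have hu1 : ContinuousAt (fun u : ℝ => u • g u) 0 := continuousAt_id.smul hgcont
      have hu2 : ContinuousAt (fun u : ℝ => M₀ + u • g u) 0 := continuousAt_const.add hu1
      have hu3 : ContinuousAt (fun u : ℝ => α • (M₀ + u • g u)) 0 := hu2.const_smul α
      have hA1 : ContinuousAt (fun u : ℝ => NormedSpace.exp (α • (M₀ + u • g u))) 0 :=
        NormedSpace.exp_continuous.continuousAt.comp hu3
      exact ((entryCLM i j).continuous.continuousAt.comp
        ((hA1.mul hgcont).mul continuousAt_const))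
  have hder0 : HasDerivAt (fun u : ℝ => NormedSpace.exp M₀ i j + (u : ℂ) * Gfun u)
      (Gfun 0) 0 := by
    rw [hasDerivAt_iff_isLittleO]
    have heq : (fun u : ℝ => (NormedSpace.exp M₀ i j + (u:ℂ) * Gfun u)
          - (NormedSpace.exp M₀ i j + ((0:ℝ):ℂ) * Gfun 0) - (u - 0) • Gfun 0)
        = fun u : ℝ => (u:ℂ) * (Gfun u - Gfun 0) := by
      funext u
      rw [sub_zero, Complex.real_smul]
      push_cast
      ring
    rw [heq]
    rw [Asymptotics.isLittleO_iff]
    intro ε hε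
    have hev : ∀ᶠ u in nhds (0:ℝ), ‖Gfun u - Gfun 0‖ ≤ ε := by
      have h5 : Filter.Tendsto (fun u => ‖Gfun u - Gfun 0‖) (nhds 0) (nhds 0) := by
        have h6 : ContinuousAt (fun u => ‖Gfun u - Gfun 0‖) 0 :=
          (hGcont.sub (continuousAt_const (y := Gfun 0))).norm
        have h7 : Filter.Tendsto (fun u => ‖Gfun u - Gfun 0‖) (nhds 0)
            (nhds ‖Gfun 0 - Gfun 0‖) := h6
        simpa using h7
      exact (h5.eventually_lt_const hε).mono fun u hu => hu.le
    filter_upwards [hev] with u hu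
    rw [norm_mul, Complex.norm_real, sub_zero, Real.norm_eq_abs]
    calc |u| * ‖Gfun u - Gfun 0‖ ≤ |u| * ε := by gcongr
      _ = ε * |u| := mul_comm _ _
  have hmain : HasDerivAt (fun u : ℝ => NormedSpace.exp (Complex.I • f u) i j) (Gfun 0) 0 := by
    have hkey' : (fun u : ℝ => NormedSpace.exp (Complex.I • f u) i j)
        = fun u : ℝ => NormedSpace.exp M₀ i j + (u : ℂ) * Gfun u := funext key
    rw [hkey']
    exact hder0
  have hG0 : Gfun 0 = ∫ α in (0:ℝ)..1,
      (NormedSpace.exp (α • M₀) * (Complex.I • dS) * NormedSpace.exp ((1 - α) • M₀)) i j := by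
    simp only [hGdef, zero_smul, add_zero, hg0]
  have hfinal : ((Complex.I • mIntegral fun α =>
        NormedSpace.exp ((Complex.I * (α : ℂ)) • P₀) * dS *
          NormedSpace.exp ((Complex.I * (1 - (α : ℂ))) • P₀)) i j) = Gfun 0 := by
    rw [hG0, Matrix.smul_apply, mIntegral, Matrix.of_apply, smul_eq_mul,
      ← intervalIntegral.integral_const_mul]
    refine intervalIntegral.integral_congr fun α _ => ?_
    have e1 : NormedSpace.exp ((Complex.I * (α:ℂ)) • P₀) = NormedSpace.exp (α • M₀) := by
      rw [congrFun hee]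
      congr 1
      rw [hM₀def, hrs, smul_smul, mul_comm]
    have e2 : NormedSpace.exp ((Complex.I * (1 - (α:ℂ))) • P₀)
        = NormedSpace.exp ((1 - α) • M₀) := by
      rw [congrFun hee]
      congr 1
      rw [hM₀def, hrs, smul_smul]
      congr 1
      push_cast
      ring
    rw [e1, e2, mul_smul_comm, smul_mul_assoc, Matrix.smul_apply, smul_eq_mul]
  have hconv : (fun u : ℝ => NormedSpace.exp (Complex.I • f u) i j)
      = fun u : ℝ => NormedSpace.exp (Complex.I • f u) i j := by
    funext u
    rw [congrFun hee]
  rw [hconv] at hmain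
  rw [← hfinal] at hmain
  exact hmain

end
end

section
/- Let N ≥ 1, let A, B, C be N×N complex matrices, and let g ∈ {0,1,2,3} be such that at least g of the three matrices A, B, C have rank at most 1. Then Σ_{1≤i,j≤N} |A_{i,i}·B_{j,j}·C_{i,j}| ≤ N^{(3−g)/2} · ‖A‖·‖B‖·‖C‖, where ‖·‖ denotes the matrix operator norm (largest singular value). -/
open MeasureTheory ProbabilityTheory Matrix Asymptotics
open scoped ENNReal NNReal Kronecker ProbabilityTheory

noncomputable section

/-- The operator norm of a matrix, acting on the Euclidean space `ℂ^N`. -/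
def opNorm {N : ℕ} (M : Mat N) : ℝ := ‖Matrix.toEuclideanCLM (𝕜 := ℂ) M‖

section Helpers

open scoped Matrix.Norms.L2Operator

variable {N : ℕ}

lemma opNorm_nonneg' (M : Mat N) : 0 ≤ opNorm M := norm_nonneg _

lemma norm_mulVec_le (M : Mat N) (x : Fin N → ℂ) :
    Real.sqrt (∑ i, ‖(M *ᵥ x) i‖^2) ≤ opNorm M * Real.sqrt (∑ i, ‖x i‖^2) := by
  have h := M.l2_opNorm_mulVec ((EuclideanSpace.equiv (Fin N) ℂ).symm x)
  rw [show opNorm M = ‖M‖ from rfl]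
  simpa [EuclideanSpace.norm_eq] using h

lemma col_l2 (M : Mat N) (j : Fin N) :
    Real.sqrt (∑ i, ‖M i j‖^2) ≤ opNorm M := by
  have h := norm_mulVec_le M (Pi.single j 1)
  simp only [Matrix.mulVec_single] at h
  simpa [Pi.single_apply, apply_ite, Finset.sum_ite_eq'] using h

lemma row_l2 (M : Mat N) (i : Fin N) :
    Real.sqrt (∑ j, ‖M i j‖^2) ≤ opNorm M := by
  have h := col_l2 Mᴴ i
  have he : opNorm Mᴴ = opNorm M := M.l2_opNorm_conjTranspose
  simpa [Matrix.conjTranspose_apply, he] using h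

lemma entry_le (M : Mat N) (i j : Fin N) : ‖M i j‖ ≤ opNorm M := by
  refine le_trans ?_ (col_l2 M j)
  rw [show ‖M i j‖ = Real.sqrt (‖M i j‖^2) by rw [Real.sqrt_sq (norm_nonneg _)]]
  apply Real.sqrt_le_sqrt
  exact Finset.single_le_sum (f := fun i => ‖M i j‖^2) (fun _ _ => sq_nonneg _) (Finset.mem_univ i)

lemma cs (f g : Fin N → ℝ) :
    ∑ i, f i * g i ≤ Real.sqrt (∑ i, f i^2) * Real.sqrt (∑ i, g i^2) := by
  have h := Finset.sum_mul_sq_le_sq_mul_sq Finset.univ f g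
  calc ∑ i, f i * g i ≤ |∑ i, f i * g i| := le_abs_self _
    _ = Real.sqrt ((∑ i, f i * g i)^2) := (Real.sqrt_sq_eq_abs _).symm
    _ ≤ Real.sqrt ((∑ i, f i^2) * (∑ i, g i^2)) := Real.sqrt_le_sqrt h
    _ = _ := Real.sqrt_mul (Finset.sum_nonneg fun _ _ => sq_nonneg _) _

lemma diag_l2 (M : Mat N) :
    Real.sqrt (∑ i, ‖M i i‖^2) ≤ Real.sqrt N * opNorm M := by
  calc Real.sqrt (∑ i, ‖M i i‖^2)
      ≤ Real.sqrt (∑ _i : Fin N, opNorm M ^ 2) := by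
        apply Real.sqrt_le_sqrt
        exact Finset.sum_le_sum fun i _ =>
          pow_le_pow_left₀ (norm_nonneg _) (entry_le M i i) 2
    _ = Real.sqrt N * opNorm M := by
        rw [Finset.sum_const, Finset.card_univ, Fintype.card_fin, nsmul_eq_mul,
          Real.sqrt_mul (Nat.cast_nonneg N), Real.sqrt_sq (opNorm_nonneg' M)]

lemma rank_one_decomp (M : Mat N) (h : M.rank ≤ 1) :
    ∃ u v : Fin N → ℂ, ∀ i j, M i j = v j * u i := by
  have h' : Module.finrank ℂ (LinearMap.range M.mulVecLin) ≤ 1 := h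
  rw [Submodule.finrank_le_one_iff_isPrincipal] at h'
  obtain ⟨u, hu⟩ := h'.principal
  have hcol : ∀ j, ∃ c : ℂ, ∀ i, M i j = c * u i := by
    intro j
    have hmem : (M *ᵥ Pi.single j 1) ∈ LinearMap.range M.mulVecLin :=
      ⟨Pi.single j 1, rfl⟩
    rw [hu, Submodule.mem_span_singleton] at hmem
    obtain ⟨c, hc⟩ := hmem
    refine ⟨c, fun i => ?_⟩
    have h2 := congrFun hc i
    simp only [Pi.smul_apply, smul_eq_mul] at h2
    rw [h2, Matrix.mulVec_single]
    simp
  choose v hv using hcol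
  exact ⟨u, v, fun i j => hv j i⟩

lemma rank1_norm (M : Mat N) (u v : Fin N → ℂ) (hM : ∀ i j, M i j = v j * u i) :
    Real.sqrt (∑ i, ‖u i‖^2) * Real.sqrt (∑ j, ‖v j‖^2) ≤ opNorm M := by
  set V : ℝ := ∑ j, ‖v j‖^2 with hVdef
  set U : ℝ := ∑ i, ‖u i‖^2 with hUdef
  have hV0 : 0 ≤ V := Finset.sum_nonneg fun _ _ => sq_nonneg _
  rcases eq_or_lt_of_le hV0 with h0 | hpos
  · rw [← h0, Real.sqrt_zero, mul_zero]; exact opNorm_nonneg' M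
  · have key := norm_mulVec_le M (star v)
    have hmv : ∀ i, (M *ᵥ star v) i = u i * (V : ℂ) := by
      intro i
      simp only [Matrix.mulVec, dotProduct, hM, Pi.star_apply]
      have : ∀ j, v j * u i * star (v j) = u i * ((‖v j‖^2 : ℝ) : ℂ) := by
        intro j
        rw [mul_comm (v j) (u i), mul_assoc]
        congr 1
        rw [Complex.star_def, RCLike.mul_conj]
        norm_cast
      simp_rw [this, ← Finset.mul_sum, hVdef]
      push_cast
      ring
    have hL : ∑ i, ‖(M *ᵥ star v) i‖^2 = U * V^2 := by
      simp_rw [hmv, norm_mul, Complex.norm_real, Real.norm_of_nonneg hV0, mul_pow]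
      rw [← Finset.sum_mul]
    have hR : ∑ j, ‖(star v) j‖^2 = V := by
      simp [hVdef]
    rw [hL, hR] at key
    have hsV : Real.sqrt (U * V^2) = Real.sqrt U * V := by
      rw [Real.sqrt_mul (Finset.sum_nonneg fun _ _ => sq_nonneg _), Real.sqrt_sq hV0]
    rw [hsV] at key
    have hVsq : V = Real.sqrt V * Real.sqrt V := (Real.mul_self_sqrt hV0).symm
    have hsVpos : 0 < Real.sqrt V := Real.sqrt_pos.mpr hpos
    refine (mul_le_mul_iff_of_pos_right hsVpos).mp ?_
    calc Real.sqrt U * Real.sqrt V * Real.sqrt V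
        = Real.sqrt U * V := by rw [mul_assoc, ← hVsq]
      _ ≤ opNorm M * Real.sqrt V := key

lemma sum_diag_le (M : Mat N) : ∑ i, ‖M i i‖ ≤ N * opNorm M := by
  calc ∑ i, ‖M i i‖ ≤ ∑ _i : Fin N, opNorm M :=
        Finset.sum_le_sum fun i _ => entry_le M i i
    _ = N * opNorm M := by
        rw [Finset.sum_const, Finset.card_univ, Fintype.card_fin, nsmul_eq_mul]

lemma sum_diag_le_rank1 (M : Mat N) (h : M.rank ≤ 1) : ∑ i, ‖M i i‖ ≤ opNorm M := by
  obtain ⟨u, v, huv⟩ := rank_one_decomp M h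
  calc ∑ i, ‖M i i‖ = ∑ i, ‖v i‖ * ‖u i‖ := by
        apply Finset.sum_congr rfl
        intro i _
        rw [huv i i, norm_mul]
    _ ≤ Real.sqrt (∑ i, ‖v i‖^2) * Real.sqrt (∑ i, ‖u i‖^2) := cs _ _
    _ ≤ opNorm M := by rw [mul_comm]; exact rank1_norm M u v huv

lemma weight_generic (M : Mat N) (w : Fin N → ℝ) :
    ∑ i, ‖M i i‖ * w i ≤ (Real.sqrt N * opNorm M) * Real.sqrt (∑ i, w i^2) := by
  calc ∑ i, ‖M i i‖ * w i ≤ Real.sqrt (∑ i, ‖M i i‖^2) * Real.sqrt (∑ i, w i^2) := cs _ _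
    _ ≤ (Real.sqrt N * opNorm M) * Real.sqrt (∑ i, w i^2) :=
        mul_le_mul_of_nonneg_right (diag_l2 M) (Real.sqrt_nonneg _)

lemma weight_rank1 (M : Mat N) (h : M.rank ≤ 1) (w : Fin N → ℝ) (hw : ∀ i, 0 ≤ w i) :
    ∑ i, ‖M i i‖ * w i ≤ opNorm M * Real.sqrt (∑ i, w i^2) := by
  have hwi : ∀ i, w i ≤ Real.sqrt (∑ i, w i^2) := by
    intro i
    rw [show w i = Real.sqrt (w i ^2) by rw [Real.sqrt_sq (hw i)]]
    exact Real.sqrt_le_sqrt (Finset.single_le_sum (f := fun i => w i^2)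
      (fun _ _ => sq_nonneg _) (Finset.mem_univ i))
  calc ∑ i, ‖M i i‖ * w i
      ≤ ∑ i, ‖M i i‖ * Real.sqrt (∑ i, w i^2) :=
        Finset.sum_le_sum fun i _ => mul_le_mul_of_nonneg_left (hwi i) (norm_nonneg _)
    _ = (∑ i, ‖M i i‖) * Real.sqrt (∑ i, w i^2) := by rw [← Finset.sum_mul]
    _ ≤ opNorm M * Real.sqrt (∑ i, w i^2) :=
        mul_le_mul_of_nonneg_right (sum_diag_le_rank1 M h) (Real.sqrt_nonneg _)

/-- Core bound using the rows of `C`. -/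
lemma coreRow (A B C : Mat N) :
    ∑ i, ∑ j, ‖A i i‖ * ‖B j j‖ * ‖C i j‖ ≤
      (∑ i, ‖A i i‖) * (Real.sqrt N * opNorm B * opNorm C) := by
  have inner : ∀ i, ∑ j, ‖B j j‖ * ‖C i j‖ ≤ Real.sqrt N * opNorm B * opNorm C := by
    intro i
    calc ∑ j, ‖B j j‖ * ‖C i j‖
        ≤ Real.sqrt (∑ j, ‖B j j‖^2) * Real.sqrt (∑ j, ‖C i j‖^2) := cs _ _
      _ ≤ (Real.sqrt N * opNorm B) * opNorm C := by
          exact mul_le_mul (diag_l2 B) (row_l2 C i) (Real.sqrt_nonneg _)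
            (mul_nonneg (Real.sqrt_nonneg _) (opNorm_nonneg' _))
  calc ∑ i, ∑ j, ‖A i i‖ * ‖B j j‖ * ‖C i j‖
      = ∑ i, ‖A i i‖ * ∑ j, ‖B j j‖ * ‖C i j‖ := by
        apply Finset.sum_congr rfl
        intro i _
        rw [Finset.mul_sum]
        apply Finset.sum_congr rfl
        intro j _
        ring
    _ ≤ ∑ i, ‖A i i‖ * (Real.sqrt N * opNorm B * opNorm C) :=
        Finset.sum_le_sum fun i _ => mul_le_mul_of_nonneg_left (inner i) (norm_nonneg _)
    _ = (∑ i, ‖A i i‖) * (Real.sqrt N * opNorm B * opNorm C) := by rw [← Finset.sum_mul]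

/-- Core bound using the columns of `C`. -/
lemma coreCol (A B C : Mat N) :
    ∑ i, ∑ j, ‖A i i‖ * ‖B j j‖ * ‖C i j‖ ≤
      (∑ j, ‖B j j‖) * (Real.sqrt N * opNorm A * opNorm C) := by
  have inner : ∀ j, ∑ i, ‖A i i‖ * ‖C i j‖ ≤ Real.sqrt N * opNorm A * opNorm C := by
    intro j
    calc ∑ i, ‖A i i‖ * ‖C i j‖
        ≤ Real.sqrt (∑ i, ‖A i i‖^2) * Real.sqrt (∑ i, ‖C i j‖^2) := cs _ _
      _ ≤ (Real.sqrt N * opNorm A) * opNorm C := by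
          exact mul_le_mul (diag_l2 A) (col_l2 C j) (Real.sqrt_nonneg _)
            (mul_nonneg (Real.sqrt_nonneg _) (opNorm_nonneg' _))
  calc ∑ i, ∑ j, ‖A i i‖ * ‖B j j‖ * ‖C i j‖
      = ∑ j, ‖B j j‖ * ∑ i, ‖A i i‖ * ‖C i j‖ := by
        rw [Finset.sum_comm]
        apply Finset.sum_congr rfl
        intro j _
        rw [Finset.mul_sum]
        apply Finset.sum_congr rfl
        intro i _
        ring
    _ ≤ ∑ j, ‖B j j‖ * (Real.sqrt N * opNorm A * opNorm C) :=
        Finset.sum_le_sum fun j _ => mul_le_mul_of_nonneg_left (inner j) (norm_nonneg _)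
    _ = (∑ j, ‖B j j‖) * (Real.sqrt N * opNorm A * opNorm C) := by rw [← Finset.sum_mul]

/-- Core bound when `C` has rank at most one. -/
lemma coreC (A B C : Mat N) (hC : C.rank ≤ 1) (PA PB : ℝ)
    (hPA : 0 ≤ PA) (hPB : 0 ≤ PB)
    (hA : ∀ w : Fin N → ℝ, (∀ i, 0 ≤ w i) →
      ∑ i, ‖A i i‖ * w i ≤ PA * Real.sqrt (∑ i, w i^2))
    (hB : ∀ w : Fin N → ℝ, (∀ i, 0 ≤ w i) →
      ∑ j, ‖B j j‖ * w j ≤ PB * Real.sqrt (∑ j, w j^2)) :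
    ∑ i, ∑ j, ‖A i i‖ * ‖B j j‖ * ‖C i j‖ ≤ PA * PB * opNorm C := by
  obtain ⟨u, v, huv⟩ := rank_one_decomp C hC
  have hfac : ∑ i, ∑ j, ‖A i i‖ * ‖B j j‖ * ‖C i j‖
      = (∑ i, ‖A i i‖ * ‖u i‖) * (∑ j, ‖B j j‖ * ‖v j‖) := by
    rw [Finset.sum_mul_sum]
    apply Finset.sum_congr rfl
    intro i _
    apply Finset.sum_congr rfl
    intro j _
    rw [huv i j, norm_mul]
    ring
  rw [hfac]
  have h1 := hA (fun i => ‖u i‖) (fun i => norm_nonneg _)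
  have h2 := hB (fun j => ‖v j‖) (fun j => norm_nonneg _)
  calc (∑ i, ‖A i i‖ * ‖u i‖) * (∑ j, ‖B j j‖ * ‖v j‖)
      ≤ (PA * Real.sqrt (∑ i, ‖u i‖^2)) * (PB * Real.sqrt (∑ j, ‖v j‖^2)) := by
        apply mul_le_mul h1 h2
        · exact Finset.sum_nonneg fun j _ => mul_nonneg (norm_nonneg _) (norm_nonneg _)
        · exact mul_nonneg hPA (Real.sqrt_nonneg _)
    _ = (PA * PB) * (Real.sqrt (∑ i, ‖u i‖^2) * Real.sqrt (∑ j, ‖v j‖^2)) := by ring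
    _ ≤ PA * PB * opNorm C :=
        mul_le_mul_of_nonneg_left (rank1_norm C u v huv) (mul_nonneg hPA hPB)

end Helpers

/-- If at least `g` of the matrices `A, B, C` have rank at most one, then
`∑_{i,j} |A_{ii} B_{jj} C_{ij}| ≤ N^{(3-g)/2} ‖A‖ ‖B‖ ‖C‖`. -/
theorem entry_sum_diag_bound
    (N : ℕ) (hN : 1 ≤ N) (A B C : Mat N) (g : ℕ) (hg : g ≤ 3)
    (hr : g ≤ (Finset.univ.filter fun i : Fin 3 => (![A, B, C] i).rank ≤ 1).card) :
    ∑ i : Fin N, ∑ j : Fin N, ‖A i i * B j j * C i j‖ ≤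
      (N : ℝ) ^ (((3 : ℝ) - g) / 2) * (opNorm A * opNorm B * opNorm C) := by
  have hsum : ∑ i : Fin N, ∑ j : Fin N, ‖A i i * B j j * C i j‖
      = ∑ i, ∑ j, ‖A i i‖ * ‖B j j‖ * ‖C i j‖ := by
    simp [norm_mul]
  rw [hsum]
  have hP0 : 0 ≤ opNorm A * opNorm B * opNorm C :=
    mul_nonneg (mul_nonneg (opNorm_nonneg' A) (opNorm_nonneg' B)) (opNorm_nonneg' C)
  have hN1 : (1:ℝ) ≤ (N:ℝ) := by exact_mod_cast hN
  have hNpos : (0:ℝ) < (N:ℝ) := by linarith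
  have hg3 : (g:ℝ) ≤ 3 := by exact_mod_cast hg
  have finish : ∀ c e : ℝ, c ≤ (N:ℝ) ^ e → e ≤ ((3:ℝ) - g)/2 →
      (∑ i, ∑ j, ‖A i i‖ * ‖B j j‖ * ‖C i j‖) ≤ c * (opNorm A * opNorm B * opNorm C) →
      (∑ i, ∑ j, ‖A i i‖ * ‖B j j‖ * ‖C i j‖) ≤
        (N : ℝ) ^ (((3 : ℝ) - g) / 2) * (opNorm A * opNorm B * opNorm C) := by
    intro c e hce he hS
    refine hS.trans (mul_le_mul_of_nonneg_right ?_ hP0)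
    exact hce.trans (Real.rpow_le_rpow_of_exponent_le hN1 he)
  have hsq : Real.sqrt N = (N:ℝ) ^ ((1:ℝ)/2) := Real.sqrt_eq_rpow _
  have hNe : (N:ℝ) = (N:ℝ) ^ (1:ℝ) := (Real.rpow_one _).symm
  have hNsq : (N:ℝ) * Real.sqrt N = (N:ℝ) ^ ((3:ℝ)/2) := by
    rw [hsq]
    nth_rewrite 1 [hNe]
    rw [← Real.rpow_add hNpos]
    norm_num
  rw [Finset.card_filter, Fin.sum_univ_three] at hr
  simp only [Matrix.cons_val_zero, Matrix.cons_val_one, Matrix.head_cons,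
    Matrix.cons_val_two, Matrix.tail_cons] at hr
  by_cases hC : C.rank ≤ 1
  · by_cases hA : A.rank ≤ 1
    · by_cases hB : B.rank ≤ 1
      · -- all three rank one
        have hS := coreC A B C hC (opNorm A) (opNorm B) (opNorm_nonneg' A) (opNorm_nonneg' B)
          (fun w hw => weight_rank1 A hA w hw) (fun w hw => weight_rank1 B hB w hw)
        refine finish 1 0 (le_of_eq (Real.rpow_zero _).symm) (by linarith) ?_
        calc ∑ i, ∑ j, ‖A i i‖ * ‖B j j‖ * ‖C i j‖
            ≤ opNorm A * opNorm B * opNorm C := hS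
          _ = 1 * (opNorm A * opNorm B * opNorm C) := by ring
      · -- A, C rank one
        simp only [hA, hB, hC, ↓reduceIte] at hr
        norm_num at hr
        have hg2 : (g:ℝ) ≤ 2 := by exact_mod_cast hr
        have hS := coreC A B C hC (opNorm A) (Real.sqrt N * opNorm B) (opNorm_nonneg' A)
          (mul_nonneg (Real.sqrt_nonneg _) (opNorm_nonneg' B))
          (fun w hw => weight_rank1 A hA w hw) (fun w _ => weight_generic B w)
        refine finish (Real.sqrt N) ((1:ℝ)/2) (le_of_eq hsq) (by linarith) ?_
        calc ∑ i, ∑ j, ‖A i i‖ * ‖B j j‖ * ‖C i j‖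
            ≤ opNorm A * (Real.sqrt N * opNorm B) * opNorm C := hS
          _ = Real.sqrt N * (opNorm A * opNorm B * opNorm C) := by ring
    · by_cases hB : B.rank ≤ 1
      · -- B, C rank one
        simp only [hA, hB, hC, ↓reduceIte] at hr
        norm_num at hr
        have hg2 : (g:ℝ) ≤ 2 := by exact_mod_cast hr
        have hS := coreC A B C hC (Real.sqrt N * opNorm A) (opNorm B)
          (mul_nonneg (Real.sqrt_nonneg _) (opNorm_nonneg' A)) (opNorm_nonneg' B)
          (fun w _ => weight_generic A w) (fun w hw => weight_rank1 B hB w hw)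
        refine finish (Real.sqrt N) ((1:ℝ)/2) (le_of_eq hsq) (by linarith) ?_
        calc ∑ i, ∑ j, ‖A i i‖ * ‖B j j‖ * ‖C i j‖
            ≤ (Real.sqrt N * opNorm A) * opNorm B * opNorm C := hS
          _ = Real.sqrt N * (opNorm A * opNorm B * opNorm C) := by ring
      · -- only C rank one
        simp only [hA, hB, hC, ↓reduceIte] at hr
        norm_num at hr
        have hg1 : (g:ℝ) ≤ 1 := by exact_mod_cast hr
        have hS := coreC A B C hC (Real.sqrt N * opNorm A) (Real.sqrt N * opNorm B)
          (mul_nonneg (Real.sqrt_nonneg _) (opNorm_nonneg' A))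
          (mul_nonneg (Real.sqrt_nonneg _) (opNorm_nonneg' B))
          (fun w _ => weight_generic A w) (fun w _ => weight_generic B w)
        refine finish (N:ℝ) 1 (le_of_eq hNe) (by linarith) ?_
        calc ∑ i, ∑ j, ‖A i i‖ * ‖B j j‖ * ‖C i j‖
            ≤ (Real.sqrt N * opNorm A) * (Real.sqrt N * opNorm B) * opNorm C := hS
          _ = (Real.sqrt N * Real.sqrt N) * (opNorm A * opNorm B * opNorm C) := by ring
          _ = (N:ℝ) * (opNorm A * opNorm B * opNorm C) := by
              rw [Real.mul_self_sqrt (Nat.cast_nonneg N)]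
  · by_cases hA : A.rank ≤ 1
    · -- A rank one (C not)
      have hg2 : (g:ℝ) ≤ 2 := by
        simp only [hA, hC, ↓reduceIte] at hr
        have : g ≤ 2 := by
          by_cases hB : B.rank ≤ 1
          · simp only [hB, ↓reduceIte] at hr; omega
          · simp only [hB, ↓reduceIte] at hr; omega
        exact_mod_cast this
      have hS := coreRow A B C
      refine finish (Real.sqrt N) ((1:ℝ)/2) (le_of_eq hsq) (by linarith) ?_
      calc ∑ i, ∑ j, ‖A i i‖ * ‖B j j‖ * ‖C i j‖
          ≤ (∑ i, ‖A i i‖) * (Real.sqrt N * opNorm B * opNorm C) := hS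
        _ ≤ opNorm A * (Real.sqrt N * opNorm B * opNorm C) := by
            apply mul_le_mul_of_nonneg_right (sum_diag_le_rank1 A hA)
            exact mul_nonneg (mul_nonneg (Real.sqrt_nonneg _) (opNorm_nonneg' B))
              (opNorm_nonneg' C)
        _ = Real.sqrt N * (opNorm A * opNorm B * opNorm C) := by ring
    · by_cases hB : B.rank ≤ 1
      · -- B rank one only
        simp only [hA, hB, hC, ↓reduceIte] at hr
        norm_num at hr
        have hg1 : (g:ℝ) ≤ 1 := by exact_mod_cast hr
        have hS := coreCol A B C
        refine finish (Real.sqrt N) ((1:ℝ)/2) (le_of_eq hsq) (by linarith) ?_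
        calc ∑ i, ∑ j, ‖A i i‖ * ‖B j j‖ * ‖C i j‖
            ≤ (∑ j, ‖B j j‖) * (Real.sqrt N * opNorm A * opNorm C) := hS
          _ ≤ opNorm B * (Real.sqrt N * opNorm A * opNorm C) := by
              apply mul_le_mul_of_nonneg_right (sum_diag_le_rank1 B hB)
              exact mul_nonneg (mul_nonneg (Real.sqrt_nonneg _) (opNorm_nonneg' A))
                (opNorm_nonneg' C)
          _ = Real.sqrt N * (opNorm A * opNorm B * opNorm C) := by ring
      · -- none rank one
        simp only [hA, hB, hC, ↓reduceIte] at hr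
        norm_num at hr
        have hg0 : (g:ℝ) ≤ 0 := by exact_mod_cast Nat.le_zero.mpr (by omega)
        have hS := coreRow A B C
        refine finish ((N:ℝ) * Real.sqrt N) ((3:ℝ)/2) (le_of_eq hNsq) (by linarith) ?_
        calc ∑ i, ∑ j, ‖A i i‖ * ‖B j j‖ * ‖C i j‖
            ≤ (∑ i, ‖A i i‖) * (Real.sqrt N * opNorm B * opNorm C) := hS
          _ ≤ ((N:ℝ) * opNorm A) * (Real.sqrt N * opNorm B * opNorm C) := by
              apply mul_le_mul_of_nonneg_right (sum_diag_le A)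
              exact mul_nonneg (mul_nonneg (Real.sqrt_nonneg _) (opNorm_nonneg' B))
                (opNorm_nonneg' C)
          _ = ((N:ℝ) * Real.sqrt N) * (opNorm A * opNorm B * opNorm C) := by ring


end
end
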